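/- arXiv:1505.02154 — 4 statements merged into one kernel-verified Lean document; each statement's English description precedes it below -/
import Mathlib

section
/- For every x = (x_i)_{i∈D} with x_i ≥ 0 for all i and ‖x‖_σ < ∞, every real p ≥ 1, and every subset D′ ⊆ D, one has Σ_{i∈D′} σ_i (Σ_{j∈D} m(i,j) x_j)^p ≤ c · Σ_{i∈D} σ_i x_i^p (as an inequality in [0,∞]). -/
open scoped ENNReal

/-- Jensen's inequality for countable convex combinations in `ℝ≥0∞`. -/
lemma jensen_tsum_rpow {D : Type*} (w z : D → ℝ≥0∞) (hw : ∑' j, w j = 1)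
    {p : ℝ} (hp : 1 ≤ p) :
    (∑' j, w j * z j) ^ p ≤ ∑' j, w j * z j ^ p := by
  have hp0 : 0 < p := lt_of_lt_of_le one_pos hp
  set B : ℝ≥0∞ := ∑' j, w j * z j ^ p with hB
  -- every finite partial sum satisfies the inequality
  have key : ∀ s : Finset D, (∑ j ∈ s, w j * z j) ^ p ≤ B := by
    intro s
    set W : ℝ≥0∞ := ∑ j ∈ s, w j with hW
    have hWle1 : W ≤ 1 := hw ▸ ENNReal.sum_le_tsum s
    by_cases hW0 : W = 0
    · have hws : ∀ j ∈ s, w j = 0 := by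
        intro j hj
        exact le_antisymm (le_trans (Finset.single_le_sum (fun i _ => zero_le) hj)
          (le_of_eq hW0)) zero_le
      have hz0 : ∑ j ∈ s, w j * z j = 0 := Finset.sum_eq_zero fun j hj => by
        rw [hws j hj, zero_mul]
      rw [hz0, ENNReal.zero_rpow_of_pos hp0]
      exact zero_le
    · have hWtop : W ≠ ∞ := ne_top_of_le_ne_top ENNReal.one_ne_top hWle1
      have hWsum1 : ∑ j ∈ s, w j / W = 1 := by
        simp only [div_eq_mul_inv, ← Finset.sum_mul]
        exact ENNReal.mul_inv_cancel hW0 hWtop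
      have h := ENNReal.rpow_arith_mean_le_arith_mean_rpow s (fun j => w j / W) z hWsum1 hp
      have hL : ∑ j ∈ s, w j / W * z j = W⁻¹ * ∑ j ∈ s, w j * z j := by
        rw [Finset.mul_sum]
        refine Finset.sum_congr rfl fun j _ => ?_
        rw [div_eq_mul_inv, mul_comm (w j) W⁻¹, mul_assoc]
      have hR : ∑ j ∈ s, w j / W * z j ^ p = W⁻¹ * ∑ j ∈ s, w j * z j ^ p := by
        rw [Finset.mul_sum]
        refine Finset.sum_congr rfl fun j _ => ?_
        rw [div_eq_mul_inv, mul_comm (w j) W⁻¹, mul_assoc]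
      rw [hL, hR, ENNReal.mul_rpow_of_nonneg _ _ hp0.le] at h
      have hcancel : W ^ p * W⁻¹ ^ p = 1 := by
        rw [← ENNReal.mul_rpow_of_nonneg _ _ hp0.le, ENNReal.mul_inv_cancel hW0 hWtop,
          ENNReal.one_rpow]
      have h2 : (∑ j ∈ s, w j * z j) ^ p ≤ W ^ p * W⁻¹ * ∑ j ∈ s, w j * z j ^ p := by
        calc (∑ j ∈ s, w j * z j) ^ p
            = W ^ p * (W⁻¹ ^ p * (∑ j ∈ s, w j * z j) ^ p) := by
              rw [← mul_assoc, hcancel, one_mul]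
          _ ≤ W ^ p * (W⁻¹ * ∑ j ∈ s, w j * z j ^ p) :=
              mul_le_mul_right h _
          _ = W ^ p * W⁻¹ * ∑ j ∈ s, w j * z j ^ p := by rw [mul_assoc]
      have hWp1 : W ^ p * W⁻¹ ≤ 1 := by
        rw [← ENNReal.rpow_neg_one W, ← ENNReal.rpow_add p (-1) hW0 hWtop]
        exact ENNReal.rpow_le_one hWle1 (by linarith)
      calc (∑ j ∈ s, w j * z j) ^ p
          ≤ W ^ p * W⁻¹ * ∑ j ∈ s, w j * z j ^ p := h2
        _ ≤ 1 * ∑ j ∈ s, w j * z j ^ p := mul_le_mul_left hWp1 _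
        _ = ∑ j ∈ s, w j * z j ^ p := one_mul _
        _ ≤ B := ENNReal.sum_le_tsum s
  -- pass to the supremum
  have hBp : (B ^ (1 / p)) ^ p = B := by
    rw [← ENNReal.rpow_mul, one_div_mul_cancel hp0.ne', ENNReal.rpow_one]
  have hsle : (∑' j, w j * z j) ≤ B ^ (1 / p) := by
    rw [ENNReal.tsum_eq_iSup_sum]
    refine iSup_le fun s => ?_
    rw [← ENNReal.rpow_le_rpow_iff hp0, hBp]
    exact key s
  calc (∑' j, w j * z j) ^ p ≤ (B ^ (1 / p)) ^ p := ENNReal.rpow_le_rpow hsle hp0.le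
    _ = B := hBp

/-- Weighted `p`-th moment estimate for migration averages (Lemma on
`∑_{i∈D'} σ_i (∑_j m(i,j) x_j)^p ≤ c ∑_i σ_i x_i^p`, as an inequality in `[0,∞]`). -/
theorem stmt_4 {D : Type*} [Countable D]
    (σ : D → ℝ) (hσ : ∀ i, 0 < σ i) (hσsum : Summable σ)
    (m : D → D → ℝ) (hm : ∀ i j, 0 ≤ m i j)
    (hrow : ∀ i, ∑' k, m i k = 1) (hcol : ∀ i, ∑' k, m k i = 1)
    (c : ℝ) (hc : 0 < c) (hcσ : ∀ j, ∑' i, σ i * m i j ≤ c * σ j)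
    (x : D → ℝ) (hx : ∀ i, 0 ≤ x i) (hxσ : Summable fun i => σ i * x i)
    (p : ℝ) (hp : 1 ≤ p) (S : Set D) :
    ∑' i : S, ENNReal.ofReal (σ i.val) *
        (∑' j, ENNReal.ofReal (m i.val j) * ENNReal.ofReal (x j)) ^ p
      ≤ ENNReal.ofReal c * ∑' i, ENNReal.ofReal (σ i) * ENNReal.ofReal (x i) ^ p := by
  -- summability of rows of m
  have hmsum : ∀ i, Summable (m i) := by
    intro i
    by_contra h
    have := hrow i
    rw [tsum_eq_zero_of_not_summable h] at this
    norm_num at this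
  -- rows of ofReal m sum to 1
  have hrow' : ∀ i, ∑' j, ENNReal.ofReal (m i j) = 1 := by
    intro i
    rw [← ENNReal.ofReal_tsum_of_nonneg (hm i) (hmsum i), hrow i, ENNReal.ofReal_one]
  -- Jensen
  have step1 : ∀ i : D, ENNReal.ofReal (σ i) *
      (∑' j, ENNReal.ofReal (m i j) * ENNReal.ofReal (x j)) ^ p
      ≤ ENNReal.ofReal (σ i) * ∑' j, ENNReal.ofReal (m i j) * ENNReal.ofReal (x j) ^ p :=
    fun i => mul_le_mul_right
      (jensen_tsum_rpow (fun j => ENNReal.ofReal (m i j)) (fun j => ENNReal.ofReal (x j))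
        (hrow' i) hp) _
  -- restrict subtype sum and sum over all of D
  calc ∑' i : S, ENNReal.ofReal (σ i.val) *
        (∑' j, ENNReal.ofReal (m i.val j) * ENNReal.ofReal (x j)) ^ p
      ≤ ∑' i : S, ENNReal.ofReal (σ i.val) *
        ∑' j, ENNReal.ofReal (m i.val j) * ENNReal.ofReal (x j) ^ p :=
        ENNReal.tsum_le_tsum fun i => step1 i.val
    _ ≤ ∑' i : D, ENNReal.ofReal (σ i) *
        ∑' j, ENNReal.ofReal (m i j) * ENNReal.ofReal (x j) ^ p :=
        ENNReal.tsum_comp_le_tsum_of_injective Subtype.coe_injective _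
    _ = ∑' i : D, ∑' j, ENNReal.ofReal (σ i) *
          (ENNReal.ofReal (m i j) * ENNReal.ofReal (x j) ^ p) :=
        tsum_congr fun i => ENNReal.tsum_mul_left.symm
    _ = ∑' j, ∑' i : D, ENNReal.ofReal (σ i) *
          (ENNReal.ofReal (m i j) * ENNReal.ofReal (x j) ^ p) := ENNReal.tsum_comm
    _ = ∑' j, (∑' i, ENNReal.ofReal (σ i) * ENNReal.ofReal (m i j)) * ENNReal.ofReal (x j) ^ p := by
        refine tsum_congr fun j => ?_
        rw [show (∑' i : D, ENNReal.ofReal (σ i) *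
            (ENNReal.ofReal (m i j) * ENNReal.ofReal (x j) ^ p)) =
            ∑' i : D, (ENNReal.ofReal (σ i) * ENNReal.ofReal (m i j)) * ENNReal.ofReal (x j) ^ p
          from tsum_congr fun i => (mul_assoc _ _ _).symm, ENNReal.tsum_mul_right]
    _ ≤ ∑' j, (ENNReal.ofReal c * ENNReal.ofReal (σ j)) * ENNReal.ofReal (x j) ^ p := by
        refine ENNReal.tsum_le_tsum fun j => mul_le_mul_left ?_ _
        have hsum : Summable fun i => σ i * m i j := by
          refine Summable.of_nonneg_of_le (fun i => mul_nonneg (hσ i).le (hm i j))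
            (fun i => ?_) hσsum
          have : m i j ≤ 1 := (hrow i) ▸ Summable.le_tsum (hmsum i) j (fun k _ => hm i k)
          calc σ i * m i j ≤ σ i * 1 := mul_le_mul_of_nonneg_left this (hσ i).le
            _ = σ i := mul_one _
        calc ∑' i, ENNReal.ofReal (σ i) * ENNReal.ofReal (m i j)
            = ∑' i, ENNReal.ofReal (σ i * m i j) :=
              tsum_congr fun i => (ENNReal.ofReal_mul (hσ i).le).symm
          _ = ENNReal.ofReal (∑' i, σ i * m i j) :=
              (ENNReal.ofReal_tsum_of_nonneg (fun i => mul_nonneg (hσ i).le (hm i j)) hsum).symm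
          _ ≤ ENNReal.ofReal (c * σ j) := ENNReal.ofReal_le_ofReal (hcσ j)
          _ = ENNReal.ofReal c * ENNReal.ofReal (σ j) := ENNReal.ofReal_mul hc.le
    _ = ENNReal.ofReal c * ∑' i, ENNReal.ofReal (σ i) * ENNReal.ofReal (x i) ^ p := by
        simp_rw [mul_assoc]
        exact ENNReal.tsum_mul_left
end

section
/- For every t ∈ [0,∞) and every h = (h_j)_{j∈D} ∈ [0,∞)^D, one has Σ_{i∈D} σ_i Σ_{j∈D} m_t(i,j) h_j ≤ e^{t(c−1)} Σ_{j∈D} σ_j h_j (as an inequality in [0,∞]), where m_t(i,j) := Σ_{n=0}^∞ e^{−t} (t^n/n!) m^n(i,j). -/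
private lemma ofReal_tsum_le' {ι : Type*} {f : ι → ℝ} (hf : ∀ n, 0 ≤ f n) :
    ENNReal.ofReal (∑' n, f n) ≤ ∑' n, ENNReal.ofReal (f n) := by
  by_cases hs : Summable f
  · rw [ENNReal.ofReal_tsum_of_nonneg hf hs]
  · rw [tsum_eq_zero_of_not_summable hs, ENNReal.ofReal_zero]
    exact zero_le

/-- Weighted bound for the semigroup `m_t`: for `h ≥ 0`,
`∑_i σ_i ∑_j m_t(i,j) h_j ≤ e^{t(c-1)} ∑_j σ_j h_j` in `[0,∞]`. -/
theorem stmt_8 {D : Type*} [Countable D] [DecidableEq D]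
    (σ : D → ℝ) (hσ : ∀ i, 0 < σ i) (hσsum : Summable σ)
    (m : D → D → ℝ) (hm : ∀ i j, 0 ≤ m i j)
    (hrow : ∀ i, ∑' k, m i k = 1) (hcol : ∀ i, ∑' k, m k i = 1)
    (c : ℝ) (hc : 0 < c) (hcσ : ∀ j, ∑' i, σ i * m i j ≤ c * σ j)
    (mpow : ℕ → D → D → ℝ)
    (hmpow0 : ∀ i j, mpow 0 i j = if i = j then 1 else 0)
    (hmpowS : ∀ n i j, mpow (n + 1) i j = ∑' k, mpow n i k * m k j)
    (t : ℝ) (ht : 0 ≤ t) (h : D → ℝ) (hh : ∀ j, 0 ≤ h j) :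
    ∑' i, ENNReal.ofReal (σ i) *
        ∑' j, ENNReal.ofReal (∑' n : ℕ, Real.exp (-t) * t ^ n / (n.factorial : ℝ) * mpow n i j) *
          ENNReal.ofReal (h j)
      ≤ ENNReal.ofReal (Real.exp (t * (c - 1))) *
          ∑' j, ENNReal.ofReal (σ j) * ENNReal.ofReal (h j) := by
  -- nonnegativity of matrix powers
  have hM0 : ∀ n i j, 0 ≤ mpow n i j := by
    intro n
    induction n with
    | zero => intro i j; rw [hmpow0]; positivity
    | succ n ih =>
        intro i j
        rw [hmpowS]
        exact tsum_nonneg fun k => mul_nonneg (ih i k) (hm k j)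
  set oσ : D → ENNReal := fun i => ENNReal.ofReal (σ i) with hoσ
  set oh : D → ENNReal := fun j => ENNReal.ofReal (h j) with hoh
  set oM : ℕ → D → D → ENNReal := fun n i j => ENNReal.ofReal (mpow n i j) with hoM
  set E : ℕ → ENNReal := fun n => ENNReal.ofReal (Real.exp (-t) * t ^ n / (n.factorial : ℝ)) with hE
  set oc : ENNReal := ENNReal.ofReal c with hoc
  have hEnn : ∀ n : ℕ, 0 ≤ Real.exp (-t) * t ^ n / (n.factorial : ℝ) := by
    intro n; positivity
  -- column sums of m bounded
  have hcolle : ∀ j, ∑' k, oσ k * ENNReal.ofReal (m k j) ≤ ENNReal.ofReal (c * σ j) := by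
    intro j
    have hsumcol : Summable (fun k => m k j) := by
      by_contra hns
      have := hcol j
      rw [tsum_eq_zero_of_not_summable hns] at this
      norm_num at this
    have hmle1 : ∀ k, m k j ≤ 1 := by
      intro k
      have := Summable.le_tsum hsumcol k (fun i _ => hm i j)
      rwa [hcol j] at this
    have hsum : Summable (fun k => σ k * m k j) :=
      Summable.of_nonneg_of_le (fun k => mul_nonneg (hσ k).le (hm k j))
        (fun k => by nlinarith [hσ k, hmle1 k, hm k j]) hσsum
    calc ∑' k, oσ k * ENNReal.ofReal (m k j)
        = ∑' k, ENNReal.ofReal (σ k * m k j) := by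
          refine tsum_congr fun k => ?_
          rw [ENNReal.ofReal_mul (hσ k).le]
      _ = ENNReal.ofReal (∑' k, σ k * m k j) :=
          (ENNReal.ofReal_tsum_of_nonneg (fun k => mul_nonneg (hσ k).le (hm k j)) hsum).symm
      _ ≤ ENNReal.ofReal (c * σ j) := ENNReal.ofReal_le_ofReal (hcσ j)
  -- key bound: ∑_i σ_i mpow n i j ≤ c^n σ_j
  have key : ∀ n j, ∑' i, oσ i * oM n i j ≤ oc ^ n * oσ j := by
    intro n
    induction n with
    | zero =>
        intro j
        have : ∀ i, oσ i * oM 0 i j = if i = j then oσ i else 0 := by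
          intro i
          simp only [hoM, hmpow0]
          split_ifs with hij <;> simp [hoσ]
        rw [tsum_congr this]
        have h2 : ∑' i, (if i = j then oσ i else 0) = if j = j then oσ j else 0 :=
          tsum_eq_single j (fun b hb => by simp [hb])
        rw [h2, if_pos rfl, pow_zero, one_mul]
    | succ n ih =>
        intro j
        have step1 : ∀ i, oM (n + 1) i j ≤ ∑' k, oM n i k * ENNReal.ofReal (m k j) := by
          intro i
          simp only [hoM, hmpowS]
          calc ENNReal.ofReal (∑' k, mpow n i k * m k j)
              ≤ ∑' k, ENNReal.ofReal (mpow n i k * m k j) :=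
                ofReal_tsum_le' fun k => mul_nonneg (hM0 n i k) (hm k j)
            _ = ∑' k, ENNReal.ofReal (mpow n i k) * ENNReal.ofReal (m k j) :=
                tsum_congr fun k => ENNReal.ofReal_mul (hM0 n i k)
        calc ∑' i, oσ i * oM (n + 1) i j
            ≤ ∑' i, oσ i * ∑' k, oM n i k * ENNReal.ofReal (m k j) := by
              gcongr with i; exact step1 i
          _ = ∑' i, ∑' k, oσ i * (oM n i k * ENNReal.ofReal (m k j)) := by
              exact tsum_congr fun i => ENNReal.tsum_mul_left.symm
          _ = ∑' k, ∑' i, oσ i * (oM n i k * ENNReal.ofReal (m k j)) := ENNReal.tsum_comm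
          _ = ∑' k, (∑' i, oσ i * oM n i k) * ENNReal.ofReal (m k j) := by
              refine tsum_congr fun k => ?_
              rw [← ENNReal.tsum_mul_right]
              exact tsum_congr fun i => by ring
          _ ≤ ∑' k, (oc ^ n * oσ k) * ENNReal.ofReal (m k j) := by
              gcongr with k; exact ih k
          _ = oc ^ n * ∑' k, oσ k * ENNReal.ofReal (m k j) := by
              rw [← ENNReal.tsum_mul_left]
              exact tsum_congr fun k => by ring
          _ ≤ oc ^ n * ENNReal.ofReal (c * σ j) := by gcongr; exact hcolle j
          _ = oc ^ (n + 1) * oσ j := by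
              rw [ENNReal.ofReal_mul hc.le, pow_succ, hoσ, hoc]; ring
  -- bound the inner ofReal tsum by the ENNReal tsum
  have inner_le : ∀ i j,
      ENNReal.ofReal (∑' n : ℕ, Real.exp (-t) * t ^ n / (n.factorial : ℝ) * mpow n i j)
        ≤ ∑' n : ℕ, E n * oM n i j := by
    intro i j
    calc ENNReal.ofReal (∑' n : ℕ, Real.exp (-t) * t ^ n / (n.factorial : ℝ) * mpow n i j)
        ≤ ∑' n : ℕ, ENNReal.ofReal (Real.exp (-t) * t ^ n / (n.factorial : ℝ) * mpow n i j) :=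
          ofReal_tsum_le' fun n => mul_nonneg (hEnn n) (hM0 n i j)
      _ = ∑' n : ℕ, E n * oM n i j :=
          tsum_congr fun n => ENNReal.ofReal_mul (hEnn n)
  calc ∑' i, oσ i *
        ∑' j, ENNReal.ofReal (∑' n : ℕ, Real.exp (-t) * t ^ n / (n.factorial : ℝ) * mpow n i j) *
          oh j
      ≤ ∑' i, oσ i * ∑' j, (∑' n : ℕ, E n * oM n i j) * oh j := by
        gcongr with i j
        exact inner_le i j
    _ = ∑' i, ∑' j, ∑' n, oσ i * (E n * oM n i j * oh j) := by
        refine tsum_congr fun i => ?_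
        rw [← ENNReal.tsum_mul_left]
        refine tsum_congr fun j => ?_
        rw [← ENNReal.tsum_mul_right, ← ENNReal.tsum_mul_left]
    _ = ∑' i, ∑' n, ∑' j, oσ i * (E n * oM n i j * oh j) :=
        tsum_congr fun i => ENNReal.tsum_comm
    _ = ∑' n, ∑' i, ∑' j, oσ i * (E n * oM n i j * oh j) := ENNReal.tsum_comm
    _ = ∑' n, ∑' j, ∑' i, oσ i * (E n * oM n i j * oh j) :=
        tsum_congr fun n => ENNReal.tsum_comm
    _ = ∑' n, E n * ∑' j, (∑' i, oσ i * oM n i j) * oh j := by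
        refine tsum_congr fun n => ?_
        rw [← ENNReal.tsum_mul_left]
        refine tsum_congr fun j => ?_
        rw [← ENNReal.tsum_mul_right, ← ENNReal.tsum_mul_left]
        exact tsum_congr fun i => by ring
    _ ≤ ∑' n, E n * ∑' j, (oc ^ n * oσ j) * oh j := by
        gcongr with n j
        exact key n j
    _ = (∑' n, E n * oc ^ n) * ∑' j, oσ j * oh j := by
        rw [← ENNReal.tsum_mul_right]
        refine tsum_congr fun n => ?_
        rw [← ENNReal.tsum_mul_left, ← ENNReal.tsum_mul_left]
        exact tsum_congr fun j => by ring
    _ = ENNReal.ofReal (Real.exp (t * (c - 1))) * ∑' j, oσ j * oh j := by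
        congr 1
        have h1 : ∀ n : ℕ, E n * oc ^ n
            = ENNReal.ofReal (Real.exp (-t) * ((t * c) ^ n / (n.factorial : ℝ))) := by
          intro n
          rw [hE, hoc, ← ENNReal.ofReal_pow hc.le, ← ENNReal.ofReal_mul (hEnn n)]
          congr 1
          rw [mul_pow]
          ring
        rw [tsum_congr h1]
        have hsum : Summable (fun n : ℕ => Real.exp (-t) * ((t * c) ^ n / (n.factorial : ℝ))) :=
          (Real.summable_pow_div_factorial (t * c)).mul_left _
        rw [← ENNReal.ofReal_tsum_of_nonneg (fun n => by positivity) hsum]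
        congr 1
        rw [tsum_mul_left]
        have : ∑' n : ℕ, (t * c) ^ n / (n.factorial : ℝ) = Real.exp (t * c) := by
          rw [Real.exp_eq_exp_ℝ, NormedSpace.exp_eq_tsum_div]
        rw [this, ← Real.exp_add]
        congr 1
        ring
end

section
/- Set u := (2κ/β)(aθ − 1) and v := (2κ/β)(1 − θ(a−1)) (both strictly positive). Then ∫_0^1 z^{u−1} (1−z)^{v−1} (a−z) ( 1/(a−z) − θ ) dz = 0. -/
open MeasureTheory

/-- The Beta-type integrand is interval integrable on `[0,1]` when both exponents
exceed `-1` after the shift, i.e. `u, v > 0`. -/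
lemma beta_intervalIntegrable {u v : ℝ} (hu : 0 < u) (hv : 0 < v) :
    IntervalIntegrable (fun z : ℝ => z ^ (u - 1) * (1 - z) ^ (v - 1)) volume 0 1 := by
  have aux : ∀ p q : ℝ, -1 < p →
      IntervalIntegrable (fun z : ℝ => z ^ p * (1 - z) ^ q) volume 0 (1/2) := by
    intro p q hp
    refine (intervalIntegral.intervalIntegrable_rpow' hp).mul_continuousOn ?_
    intro z hz
    have hz' : z ≤ 1/2 := by
      simp only [Set.uIcc_of_le (by norm_num : (0:ℝ) ≤ 1/2)] at hz
      exact hz.2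
    have h1 : (1 : ℝ) - z ≠ 0 := by norm_num; linarith
    exact ((Real.continuousAt_rpow_const (1 - z) q (Or.inl h1)).comp
      ((continuous_const.sub continuous_id).continuousAt)).continuousWithinAt
  have left := aux (u - 1) (v - 1) (by linarith)
  have right0 : IntervalIntegrable (fun w : ℝ => (1 - w) ^ (u - 1) * w ^ (v - 1))
      volume 0 (1/2) := by
    have := aux (v - 1) (u - 1) (by linarith)
    exact this.congr (fun w _ => by ring)
  have right := (right0.comp_sub_left 1).symm
  simp only [sub_sub_cancel] at right
  norm_num at right
  exact left.trans right

/-- With `u := (2κ/β)(aθ-1) > 0` and `v := (2κ/β)(1-θ(a-1)) > 0`, the integral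
`∫_0^1 z^{u-1} (1-z)^{v-1} (a-z)(1/(a-z) - θ) dz` vanishes. -/
theorem stmt_11 (κ β : ℝ) (hκ : 0 < κ) (hβ : 0 < β) (a : ℝ) (ha : 1 < a)
    (θ : ℝ) (hθ : θ ∈ Set.Ioo (1 / a) (1 / (a - 1))) :
    let u := (2 * κ / β) * (a * θ - 1)
    let v := (2 * κ / β) * (1 - θ * (a - 1))
    0 < u ∧ 0 < v ∧
    ∫ z in Set.Ioo (0 : ℝ) 1,
        z ^ (u - 1) * (1 - z) ^ (v - 1) * (a - z) * (1 / (a - z) - θ) = 0 := by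
  intro u v
  obtain ⟨hθ1, hθ2⟩ := hθ
  have ha0 : (0:ℝ) < a := lt_trans one_pos ha
  have hc : (0:ℝ) < 2 * κ / β := by positivity
  have h1 : 1 < a * θ := by
    rw [div_lt_iff₀ ha0] at hθ1; linarith [hθ1]
  have h2 : θ * (a - 1) < 1 := by
    rw [lt_div_iff₀ (by linarith : (0:ℝ) < a - 1)] at hθ2; exact hθ2
  have hu : 0 < u := mul_pos hc (by linarith)
  have hv : 0 < v := mul_pos hc (by linarith)
  refine ⟨hu, hv, ?_⟩
  set c : ℝ := 2 * κ / β with hcdef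
  set F : ℝ → ℝ := fun z => -(1 / c) * (z ^ u * (1 - z) ^ v) with hF
  have hcne : c ≠ 0 := ne_of_gt hc
  -- derivative identity on the open interval
  have key : ∀ z ∈ Set.Ioo (0:ℝ) 1,
      HasDerivAt F (z ^ (u - 1) * (1 - z) ^ (v - 1) * (a - z) * (1 / (a - z) - θ)) z := by
    intro z hz
    obtain ⟨hz0, hz1⟩ := hz
    have d1 : HasDerivAt (fun z : ℝ => z ^ u) (u * z ^ (u - 1)) z :=
      Real.hasDerivAt_rpow_const (Or.inl (ne_of_gt hz0))
    have d2 : HasDerivAt (fun z : ℝ => (1 - z) ^ v) (v * (1 - z) ^ (v - 1) * (-1)) z := by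
      have h0 : HasDerivAt (fun z : ℝ => 1 - z) (-1) z := (hasDerivAt_id z).const_sub 1
      exact (Real.hasDerivAt_rpow_const
        (p := v) (Or.inl (by norm_num; linarith))).comp z h0
    have d3 := ((d1.mul d2).const_mul (-(1 / c)))
    convert d3 using 1
    · rfl
    · rfl
    · rfl
    have e1 : z ^ u = z ^ (u - 1) * z := by
      rw [← Real.rpow_add_one (ne_of_gt hz0), sub_add_cancel]
    have e2 : (1 - z) ^ v = (1 - z) ^ (v - 1) * (1 - z) := by
      rw [← Real.rpow_add_one (by norm_num; linarith : (1:ℝ) - z ≠ 0), sub_add_cancel]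
    have haz : a - z ≠ 0 := by norm_num; linarith
    rw [e1, e2]
    have hue : u = c * (a * θ - 1) := rfl
    have hve : v = c * (1 - θ * (a - 1)) := rfl
    rw [hue, hve]
    field_simp
    ring
  -- integrability
  have hcont_rest : ContinuousOn (fun z : ℝ => (a - z) * (1 / (a - z) - θ))
      (Set.uIcc (0:ℝ) 1) := by
    intro z hz
    have hz' : z ≤ 1 := by
      simp only [Set.uIcc_of_le (by norm_num : (0:ℝ) ≤ 1)] at hz
      exact hz.2
    have haz : a - z ≠ 0 := by norm_num; linarith
    exact (((continuous_const.sub continuous_id).continuousAt).mul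
      (((continuous_const.continuousAt).div
        ((continuous_const.sub continuous_id).continuousAt) haz).sub
        continuous_const.continuousAt)).continuousWithinAt
  have hInt : IntervalIntegrable
      (fun z : ℝ => z ^ (u - 1) * (1 - z) ^ (v - 1) * (a - z) * (1 / (a - z) - θ))
      volume 0 1 := by
    have := (beta_intervalIntegrable hu hv).mul_continuousOn hcont_rest
    exact this.congr (fun z _ => by ring)
  -- continuity of F
  have hFcont : ContinuousOn F (Set.Icc (0:ℝ) 1) := by
    apply Continuous.continuousOn
    exact continuous_const.mul ((Real.continuous_rpow_const hu.le).mul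
      ((Real.continuous_rpow_const hv.le).comp (continuous_const.sub continuous_id)))
  have ftc := intervalIntegral.integral_eq_sub_of_hasDerivAt_of_le zero_le_one
    hFcont key hInt
  have hF1 : F 1 = 0 := by simp [hF, Real.zero_rpow (ne_of_gt hv)]
  have hF0 : F 0 = 0 := by simp [hF, Real.zero_rpow (ne_of_gt hu)]
  rw [← integral_Ioc_eq_integral_Ioo, ← intervalIntegral.integral_of_le zero_le_one,
    ftc, hF1, hF0, sub_zero]
end

section
/- Let c_θ := ∫_0^1 m_θ(z) dz. Then the normalized integral (1/c_θ) ∫_0^1 (1/(a−z)) m_θ(z) dz is strictly less than θ if α > β, equal to θ if α = β, and strictly greater than θ if α < β. -/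
open MeasureTheory Set

lemma aux_integrable (s t : ℝ) (hs : -1 < s) (ht : -1 < t) (h : ℝ → ℝ)
    (hc : ContinuousOn h (Icc 0 1)) :
    IntegrableOn (fun z => z ^ s * (1 - z) ^ t * h z) (Ioo (0:ℝ) 1) := by
  have hset : Ioo (0:ℝ) 1 = Ioc 0 (1/2) ∪ Ioo (1/2) 1 :=
    (Set.Ioc_union_Ioo_eq_Ioo (by norm_num) (by norm_num)).symm
  rw [hset]
  apply IntegrableOn.union
  · have hg : ContinuousOn (fun z : ℝ => (1 - z) ^ t * h z) (Icc 0 (1/2 : ℝ)) := by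
      apply ContinuousOn.mul
      · exact ContinuousOn.rpow_const (continuous_const.sub continuous_id).continuousOn
          (fun z hz => Or.inl (by simp only [mem_Icc] at hz; intro h0; linarith [hz.2]))
      · exact hc.mono (fun z hz => by simp only [mem_Icc] at hz ⊢; constructor <;> linarith [hz.1, hz.2])
    obtain ⟨C, hC⟩ := isCompact_Icc.exists_bound_of_continuousOn hg
    apply Integrable.mono' (g := fun z => C * z ^ s)
      (((intervalIntegral.intervalIntegrable_rpow' hs (a := 0) (b := 1/2)).1).const_mul C)
    · apply ContinuousOn.aestronglyMeasurable _ measurableSet_Ioc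
      apply ContinuousOn.mul
      apply ContinuousOn.mul
      · exact ContinuousOn.rpow_const continuousOn_id
          (fun z hz => Or.inl (ne_of_gt hz.1))
      · exact ContinuousOn.rpow_const (continuous_const.sub continuous_id).continuousOn
          (fun z hz => Or.inl (by simp only [mem_Ioc] at hz; intro h0; linarith [hz.2]))
      · exact hc.mono (fun z hz => by simp only [mem_Ioc, mem_Icc] at hz ⊢; constructor <;> linarith [hz.1, hz.2])
    · rw [ae_restrict_iff' measurableSet_Ioc]
      refine ae_of_all _ (fun z hz => ?_)
      simp only [mem_Ioc] at hz
      have hzpow : (0:ℝ) ≤ z ^ s := Real.rpow_nonneg hz.1.le s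
      have hb := hC z (by simp only [mem_Icc]; exact ⟨hz.1.le, hz.2⟩)
      rw [Real.norm_eq_abs] at hb ⊢
      calc |z ^ s * (1 - z) ^ t * h z| = z ^ s * |(1 - z) ^ t * h z| := by
            rw [mul_assoc, abs_mul, abs_of_nonneg hzpow]
        _ ≤ z ^ s * C := mul_le_mul_of_nonneg_left hb hzpow
        _ = C * z ^ s := mul_comm _ _
  · have hg : ContinuousOn (fun z : ℝ => z ^ s * h z) (Icc (1/2 : ℝ) 1) := by
      apply ContinuousOn.mul
      · exact ContinuousOn.rpow_const continuousOn_id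
          (fun z hz => Or.inl (by simp only [mem_Icc] at hz; intro h0; linarith [hz.1]))
      · exact hc.mono (fun z hz => by simp only [mem_Icc] at hz ⊢; constructor <;> linarith [hz.1, hz.2])
    obtain ⟨C, hC⟩ := isCompact_Icc.exists_bound_of_continuousOn hg
    have hbase : IntegrableOn (fun z : ℝ => (1 - z) ^ t) (Ioo (1/2 : ℝ) 1) := by
      have := (intervalIntegral.intervalIntegrable_rpow' ht (a := 0) (b := 1/2)).comp_sub_left 1
      norm_num at this
      exact (this.2).mono_set Ioo_subset_Ioc_self
    apply Integrable.mono' (g := fun z => C * (1 - z) ^ t) (hbase.const_mul C)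
    · apply ContinuousOn.aestronglyMeasurable _ measurableSet_Ioo
      apply ContinuousOn.mul
      apply ContinuousOn.mul
      · exact ContinuousOn.rpow_const continuousOn_id
          (fun z hz => Or.inl (by simp only [mem_Ioo] at hz; intro h0; linarith [hz.1]))
      · exact ContinuousOn.rpow_const (continuous_const.sub continuous_id).continuousOn
          (fun z hz => Or.inl (by simp only [mem_Ioo] at hz; intro h0; linarith [hz.2]))
      · exact hc.mono (fun z hz => by simp only [mem_Ioo, mem_Icc] at hz ⊢; constructor <;> linarith [hz.1, hz.2])
    · rw [ae_restrict_iff' measurableSet_Ioo]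
      refine ae_of_all _ (fun z hz => ?_)
      simp only [mem_Ioo] at hz
      have hzpow : (0:ℝ) ≤ (1 - z) ^ t := Real.rpow_nonneg (by linarith [hz.2]) t
      have hb := hC z (by simp only [mem_Icc]; exact ⟨hz.1.le, hz.2.le⟩)
      rw [Real.norm_eq_abs] at hb ⊢
      calc |z ^ s * (1 - z) ^ t * h z| = (1 - z) ^ t * |z ^ s * h z| := by
            rw [abs_mul, abs_mul, abs_of_nonneg hzpow, abs_mul]; ring
        _ ≤ (1 - z) ^ t * C := mul_le_mul_of_nonneg_left hb hzpow
        _ = C * (1 - z) ^ t := mul_comm _ _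

lemma aux_cont_a {a : ℝ} (ha : 1 < a) (s : ℝ) :
    ContinuousOn (fun z : ℝ => (a - z) ^ s) (Icc 0 1) :=
  ContinuousOn.rpow_const (continuous_const.sub continuous_id).continuousOn
    (fun z hz => Or.inl (by simp only [mem_Icc] at hz; intro h0; linarith [hz.2]))

lemma aux_ftc (a p q s : ℝ) (ha : 1 < a) (hp : 0 < p) (hq : 0 < q) :
    ∫ z in Ioo (0:ℝ) 1, (p * (z ^ (p-1) * (1-z) ^ q * (a-z) ^ s)
      - q * (z ^ p * (1-z) ^ (q-1) * (a-z) ^ s)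
      - s * (z ^ p * (1-z) ^ q * (a-z) ^ (s-1))) = 0 := by
  set f' : ℝ → ℝ := fun z => p * (z ^ (p-1) * (1-z) ^ q * (a-z) ^ s)
      - q * (z ^ p * (1-z) ^ (q-1) * (a-z) ^ s)
      - s * (z ^ p * (1-z) ^ q * (a-z) ^ (s-1)) with hf'
  set F : ℝ → ℝ := fun z => z ^ p * (1-z) ^ q * (a-z) ^ s with hF
  have hcont : ContinuousOn F (Icc 0 1) := by
    apply ContinuousOn.mul
    apply ContinuousOn.mul
    · exact ContinuousOn.rpow_const continuousOn_id (fun z hz => Or.inr hp.le)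
    · exact ContinuousOn.rpow_const (continuous_const.sub continuous_id).continuousOn
        (fun z hz => Or.inr hq.le)
    · exact aux_cont_a ha s
  have hderiv : ∀ x ∈ Ioo (0:ℝ) 1, HasDerivAt F (f' x) x := by
    intro x hx
    obtain ⟨hx0, hx1⟩ := hx
    have h1 : HasDerivAt (fun z : ℝ => z ^ p) (p * x ^ (p-1)) x :=
      Real.hasDerivAt_rpow_const (Or.inl hx0.ne')
    have h2 : HasDerivAt (fun z : ℝ => (1 - z) ^ q) ((-1) * q * (1 - x) ^ (q-1)) x :=
      HasDerivAt.rpow_const ((hasDerivAt_id x).const_sub 1) (Or.inl (by intro h0; linarith))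
    have h3 : HasDerivAt (fun z : ℝ => (a - z) ^ s) ((-1) * s * (a - x) ^ (s-1)) x :=
      HasDerivAt.rpow_const ((hasDerivAt_id x).const_sub a) (Or.inl (by intro h0; linarith))
    have := (h1.mul h2).mul h3
    convert this using 1
    · rfl
    · rfl
    · rfl
    simp only [hf', Pi.mul_apply]
    ring
  have hint : IntervalIntegrable f' volume 0 1 := by
    constructor
    · rw [integrableOn_Ioc_iff_integrableOn_Ioo]
      have t1 := (aux_integrable (p-1) q (by linarith) (by linarith)
        (fun z => (a - z) ^ s) (aux_cont_a ha s)).const_mul p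
      have t2 := (aux_integrable p (q-1) (by linarith) (by linarith)
        (fun z => (a - z) ^ s) (aux_cont_a ha s)).const_mul q
      have t3 := (aux_integrable p q (by linarith) (by linarith)
        (fun z => (a - z) ^ (s-1)) (aux_cont_a ha (s-1))).const_mul s
      exact (t1.sub t2).sub t3
    · rw [Set.Ioc_eq_empty (by norm_num)]
      exact integrableOn_empty
  have h0 : (∫ z in (0:ℝ)..1, f' z) = F 1 - F 0 :=
    intervalIntegral.integral_eq_sub_of_hasDeriv_right_of_le zero_le_one hcont
      (fun x hx => (hderiv x hx).hasDerivWithinAt) hint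
  have hF1 : F 1 = 0 := by simp [hF, Real.zero_rpow hq.ne']
  have hF0 : F 0 = 0 := by simp [hF, Real.zero_rpow hp.ne']
  rw [intervalIntegral.integral_of_le zero_le_one, integral_Ioc_eq_integral_Ioo] at h0
  rw [h0, hF1, hF0, sub_zero]

lemma aux_pos (f : ℝ → ℝ) (hint : IntegrableOn f (Ioo (0:ℝ) 1))
    (hpos : ∀ z ∈ Ioo (0:ℝ) 1, 0 < f z) : 0 < ∫ z in Ioo (0:ℝ) 1, f z := by
  have hnn : 0 ≤ᵐ[volume.restrict (Ioo (0:ℝ) 1)] f :=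
    (ae_restrict_iff' measurableSet_Ioo).2 (ae_of_all _ (fun z hz => (hpos z hz).le))
  rw [setIntegral_pos_iff_support_of_nonneg_ae hnn hint]
  have hsub : Ioo (0:ℝ) 1 ⊆ Function.support f ∩ Ioo 0 1 :=
    fun z hz => ⟨(hpos z hz).ne', hz⟩
  calc (0:ENNReal) < volume (Ioo (0:ℝ) 1) := by simp [Real.volume_Ioo]
    _ ≤ _ := measure_mono hsub

set_option maxHeartbeats 1000000 in
/-- The mean of `1/(a-z)` under the normalized speed density `m_θ/c_θ` is
`< θ`, `= θ`, or `> θ` according to whether `α > β`, `α = β`, or `α < β`. -/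
theorem stmt_13 (κ α β : ℝ) (hκ : 0 < κ) (hα : 0 < α) (hβ : 0 < β)
    (a : ℝ) (ha : 1 < a) (θ : ℝ) (hθ : θ ∈ Set.Ioo (1 / a) (1 / (a - 1))) :
    let mθ : ℝ → ℝ := fun z =>
      z ^ ((2 * κ / β) * (a * θ - 1) - 1) *
        (1 - z) ^ ((2 * κ / β) * (1 - θ * (a - 1)) - 1) *
        (a - z) ^ ((2 * α / β) - 1)
    let cθ := ∫ z in Set.Ioo (0 : ℝ) 1, mθ z
    (β < α → (1 / cθ) * ∫ z in Set.Ioo (0 : ℝ) 1, (1 / (a - z)) * mθ z < θ) ∧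
    (α = β → (1 / cθ) * ∫ z in Set.Ioo (0 : ℝ) 1, (1 / (a - z)) * mθ z = θ) ∧
    (α < β → θ < (1 / cθ) * ∫ z in Set.Ioo (0 : ℝ) 1, (1 / (a - z)) * mθ z) := by
  intro mθ cθ
  obtain ⟨hθ1, hθ2⟩ := hθ
  have ha0 : (0:ℝ) < a := by linarith
  have ha1 : (0:ℝ) < a - 1 := by linarith
  have hθ0 : 0 < θ := lt_trans (by positivity) hθ1
  set p : ℝ := 2 * κ / β * (a * θ - 1) with hpdef
  set q : ℝ := 2 * κ / β * (1 - θ * (a - 1)) with hqdef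
  set r : ℝ := 2 * α / β with hrdef
  have hβ2 : 0 < 2 * κ / β := by positivity
  have hap : 1 < θ * a := (div_lt_iff₀ ha0).1 hθ1
  have haq : θ * (a - 1) < 1 := (lt_div_iff₀ ha1).1 hθ2
  have hp : 0 < p := mul_pos hβ2 (by nlinarith)
  have hq : 0 < q := mul_pos hβ2 (by linarith)
  have hpq : 0 < p + q := by linarith
  have hz0 : θ * p = (θ * a - 1) * (p + q) := by rw [hpdef, hqdef]; ring
  set M : ℝ → ℝ := fun z => z ^ (p-1) * (1-z) ^ (q-1) * (a-z) ^ (r-1) with hMdef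
  have hm : mθ = M := rfl
  set G : ℝ → ℝ := fun z => z ^ p * (1-z) ^ q * (a-z) ^ (r-3) with hGdef
  set D : ℝ → ℝ := fun z => r - 2 * (z ^ (p-1) * (1-z) ^ q * (a-z) ^ (r-2)) with hDdummy
  clear_value D
  clear hDdummy
  -- integrabilities
  have hM_int : IntegrableOn M (Ioo (0:ℝ) 1) :=
    aux_integrable (p-1) (q-1) (by linarith) (by linarith) _ (aux_cont_a ha (r-1))
  have hMdiv_int : IntegrableOn (fun z => (1/(a-z)) * M z) (Ioo (0:ℝ) 1) := by
    have hcc : ContinuousOn (fun z : ℝ => (1/(a-z)) * (a-z) ^ (r-1)) (Icc 0 1) := by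
      apply ContinuousOn.mul _ (aux_cont_a ha (r-1))
      apply ContinuousOn.div continuousOn_const (continuous_const.sub continuous_id).continuousOn
      intro z hz; simp only [mem_Icc] at hz; intro h0; simp only [Pi.sub_apply, id_eq] at h0; linarith [hz.2]
    have := aux_integrable (p-1) (q-1) (by linarith) (by linarith) _ hcc
    exact this.congr_fun (fun z hz => by simp only [hMdef]; ring) measurableSet_Ioo
  have hG_int : IntegrableOn G (Ioo (0:ℝ) 1) :=
    aux_integrable p q (by linarith) (by linarith) _ (aux_cont_a ha (r-3))
  have ht1 := (aux_integrable (p-1) q (by linarith) (by linarith) _ (aux_cont_a ha (r-2))).const_mul p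
  have ht2 := (aux_integrable p (q-1) (by linarith) (by linarith) _ (aux_cont_a ha (r-2))).const_mul q
  have ht3 := hG_int.const_mul (r-2)
  -- FTC
  have hftc := aux_ftc a p q (r-2) ha hp hq
  have hr32 : r - 2 - 1 = r - 3 := by ring
  rw [hr32] at hftc
  -- pointwise identity
  have hpt : ∀ z ∈ Ioo (0:ℝ) 1,
      (1/(a-z)) * M z - θ * M z
        = (-(θ/(p+q))) * ((p * (z ^ (p-1) * (1-z) ^ q * (a-z) ^ (r-2))
            - q * (z ^ p * (1-z) ^ (q-1) * (a-z) ^ (r-2))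
            - (r-2) * (z ^ p * (1-z) ^ q * (a-z) ^ (r-3))) + (r-2) * G z) := by
    intro z hz
    obtain ⟨hz0', hz1⟩ := hz
    have haz : 0 < a - z := by linarith
    have e1 : z ^ p = z ^ (p-1) * z := by
      rw [← Real.rpow_add_one hz0'.ne' (p-1)]; congr 1; ring
    have e2 : (1-z) ^ q = (1-z) ^ (q-1) * (1-z) := by
      rw [← Real.rpow_add_one (by intro h0; linarith : (1:ℝ) - z ≠ 0) (q-1)]; congr 1; ring
    have e3 : (a-z) ^ (r-1) = (a-z) ^ (r-2) * (a-z) := by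
      rw [← Real.rpow_add_one haz.ne' (r-2)]; congr 1; ring
    have e4 : (a-z) ^ (r-2) = (a-z) ^ (r-3) * (a-z) := by
      rw [← Real.rpow_add_one haz.ne' (r-3)]; congr 1; ring
    simp only [hMdef, hGdef, e1, e2, e3, e4]
    field_simp
    linear_combination (z ^ (p-1) * (1-z) ^ (q-1) * (a-z) ^ (r-3) * (a-z) * (a-z)) * hz0
  -- integral identity
  set K : ℝ := ∫ z in Ioo (0:ℝ) 1, G z with hKdef
  set cM : ℝ := ∫ z in Ioo (0:ℝ) 1, M z with hcMdef
  have hKpos : 0 < K := by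
    rw [hKdef]
    refine aux_pos G hG_int (fun z hz => ?_)
    obtain ⟨hz0', hz1⟩ := hz
    have h1 : (0:ℝ) < 1 - z := by linarith
    have h2 : (0:ℝ) < a - z := by linarith
    simp only [hGdef]
    exact mul_pos (mul_pos (Real.rpow_pos_of_pos hz0' _) (Real.rpow_pos_of_pos h1 _))
      (Real.rpow_pos_of_pos h2 _)
  have hcMpos : 0 < cM := by
    rw [hcMdef]
    refine aux_pos M hM_int (fun z hz => ?_)
    obtain ⟨hz0', hz1⟩ := hz
    have h1 : (0:ℝ) < 1 - z := by linarith
    have h2 : (0:ℝ) < a - z := by linarith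
    simp only [hMdef]
    exact mul_pos (mul_pos (Real.rpow_pos_of_pos hz0' _) (Real.rpow_pos_of_pos h1 _))
      (Real.rpow_pos_of_pos h2 _)
  have h1 : (∫ z in Ioo (0:ℝ) 1, ((1/(a-z)) * M z - θ * M z))
      = (∫ z in Ioo (0:ℝ) 1, (1/(a-z)) * M z) - θ * cM := by
    rw [integral_sub hMdiv_int (hM_int.const_mul θ), integral_const_mul, hcMdef]
  have hDint : Integrable (fun z : ℝ => p * (z ^ (p-1) * (1-z) ^ q * (a-z) ^ (r-2))
      - q * (z ^ p * (1-z) ^ (q-1) * (a-z) ^ (r-2))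
      - (r-2) * (z ^ p * (1-z) ^ q * (a-z) ^ (r-3))) (volume.restrict (Ioo (0:ℝ) 1)) :=
    (ht1.sub ht2).sub ht3
  have hGint2 : Integrable (fun z : ℝ => (r-2) * G z) (volume.restrict (Ioo (0:ℝ) 1)) :=
    hG_int.const_mul (r-2)
  have h2 : (∫ z in Ioo (0:ℝ) 1, ((1/(a-z)) * M z - θ * M z))
      = -(θ/(p+q)) * ((r-2) * K) := by
    rw [setIntegral_congr_fun measurableSet_Ioo hpt, integral_const_mul,
      integral_add hDint hGint2, hftc, integral_const_mul, zero_add, hKdef]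
  have hIeq : (∫ z in Ioo (0:ℝ) 1, (1/(a-z)) * M z)
      = θ * cM - θ * (r-2) / (p+q) * K := by
    have h3 := h1.symm.trans h2
    linear_combination h3
  have hccθ : cθ = cM := rfl
  have hgoal : (∫ z in Set.Ioo (0:ℝ) 1, (1 / (a - z)) * mθ z)
      = θ * cM - θ * (r-2) / (p+q) * K := by rw [hm]; exact hIeq
  have hsplit : (1/cM) * (θ * cM - θ * (r-2) / (p+q) * K)
      = θ - (θ * (r-2) / (p+q) * K) / cM := by
    field_simp
  refine ⟨?_, ?_, ?_⟩
  · intro hba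
    have hr2 : 0 < r - 2 := by
      have : (2:ℝ) < 2 * α / β := by rw [lt_div_iff₀ hβ]; nlinarith
      rw [hrdef]; linarith
    rw [hccθ, hgoal, hsplit]
    have hcK : 0 < (θ * (r-2) / (p+q) * K) / cM :=
      div_pos (mul_pos (div_pos (mul_pos hθ0 hr2) hpq) hKpos) hcMpos
    linarith
  · intro hab
    have hr2 : r - 2 = 0 := by
      rw [hrdef, hab]; field_simp; norm_num
    rw [hccθ, hgoal, hsplit, hr2]
    simp
  · intro hab
    have hr2 : r - 2 < 0 := by
      have : 2 * α / β < 2 := by rw [div_lt_iff₀ hβ]; nlinarith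
      rw [hrdef]; linarith
    rw [hccθ, hgoal, hsplit]
    have hcK : (θ * (r-2) / (p+q) * K) / cM < 0 := by
      apply div_neg_of_neg_of_pos _ hcMpos
      apply mul_neg_of_neg_of_pos _ hKpos
      exact div_neg_of_neg_of_pos (mul_neg_of_pos_of_neg hθ0 hr2) hpq
    linarith
end
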